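/- Let 0 < q ≤ 1 and let A be an m×n real matrix. Suppose that for every nonzero h in the kernel of A, ‖h‖_q / ‖h‖₂ > 3^{1/q} · s^{1/q - 1/2}. Then for every s-sparse vector x₀ with x₀ ≠ 0 and every nonzero h in ker(A), ‖x₀‖_q^q / ‖x₀‖₂^q < ‖x₀ + h‖_q^q / ‖x₀ + h‖₂^q. In particular, every s-sparse vector x₀ is the unique minimizer of ‖x‖_q/‖x‖₂ subject to Ax = Ax₀. -/

import Mathlib

open Finset Real

lemma aux_add_rpow {q : ℝ} (hq0 : 0 < q) (hq1 : q ≤ 1) {a b : ℝ}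
    (ha : 0 ≤ a) (hb : 0 ≤ b) : (a + b) ^ q ≤ a ^ q + b ^ q := by
  lift a to NNReal using ha
  lift b to NNReal using hb
  have := NNReal.rpow_add_le_add_rpow a b hq0.le hq1
  exact_mod_cast this

lemma aux_abs_add_rpow {q : ℝ} (hq0 : 0 < q) (hq1 : q ≤ 1) (a b : ℝ) :
    |a + b| ^ q ≤ |a| ^ q + |b| ^ q :=
  le_trans (Real.rpow_le_rpow (abs_nonneg _) (abs_add_le a b) hq0.le)
    (aux_add_rpow hq0 hq1 (abs_nonneg a) (abs_nonneg b))

lemma aux_sparse {q : ℝ} (hq0 : 0 < q) (hq1 : q ≤ 1) {n s : ℕ}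
    (T : Finset (Fin n)) (hT : T.card ≤ s) (x : Fin n → ℝ) :
    ∑ i ∈ T, |x i| ^ q ≤ (s : ℝ) ^ (1 - q / 2) * (∑ i ∈ T, x i ^ 2) ^ (q / 2) := by
  rcases T.eq_empty_or_nonempty with rfl | hne
  · simp; positivity
  have hc : (0 : ℝ) < T.card := by exact_mod_cast hne.card_pos
  have key := Real.arith_mean_le_rpow_mean T (fun _ => 1 / (T.card : ℝ))
    (fun i => |x i| ^ q) (fun i _ => by positivity)
    (by simp [Finset.sum_div]; field_simp) (fun i _ => by positivity)
    (p := 2 / q) (by rw [le_div_iff₀ hq0]; linarith)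
  have hz : ∀ i, (|x i| ^ q) ^ (2 / q) = x i ^ 2 := by
    intro i
    have h1 : q * (2 / q) = 2 := by field_simp
    calc (|x i| ^ q) ^ (2 / q) = |x i| ^ (q * (2 / q)) :=
          (Real.rpow_mul (abs_nonneg _) _ _).symm
      _ = |x i| ^ (2 : ℝ) := by rw [h1]
      _ = |x i| ^ (2 : ℕ) := by rw [← Real.rpow_natCast]; norm_num
      _ = x i ^ 2 := sq_abs _
  simp only [hz, one_div_div] at key
  have hsum : ∀ z : Fin n → ℝ, ∑ i ∈ T, 1 / (T.card : ℝ) * z i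
      = (∑ i ∈ T, z i) / (T.card : ℝ) := by
    intro z; rw [← Finset.mul_sum]; ring
  rw [hsum, hsum] at key
  have hX : (0 : ℝ) ≤ ∑ i ∈ T, x i ^ 2 := by positivity
  rw [Real.div_rpow hX hc.le] at key
  have step1 : ∑ i ∈ T, |x i| ^ q
      ≤ (T.card : ℝ) ^ (1 - q / 2) * (∑ i ∈ T, x i ^ 2) ^ (q / 2) := by
    have h2 : ((T.card : ℝ)) ^ (1 - q / 2) = (T.card : ℝ) / (T.card : ℝ) ^ (q / 2) := by
      rw [Real.rpow_sub hc, Real.rpow_one]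
    rw [h2]
    rw [div_le_iff₀ hc] at key
    calc ∑ i ∈ T, |x i| ^ q
        ≤ (∑ i ∈ T, x i ^ 2) ^ (q / 2) / (T.card : ℝ) ^ (q / 2) * (T.card : ℝ) := key
      _ = (T.card : ℝ) / (T.card : ℝ) ^ (q / 2) * (∑ i ∈ T, x i ^ 2) ^ (q / 2) := by ring
  refine step1.trans (mul_le_mul_of_nonneg_right ?_ (by positivity))
  exact Real.rpow_le_rpow hc.le (by exact_mod_cast hT) (by linarith)

lemma aux_minkowski {n : ℕ} (x y : Fin n → ℝ) :
    Real.sqrt (∑ i, (x i + y i) ^ 2)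
      ≤ Real.sqrt (∑ i, x i ^ 2) + Real.sqrt (∑ i, y i ^ 2) := by
  have key : ∀ v : Fin n → ℝ,
      Real.sqrt (∑ i, v i ^ 2) = ‖(WithLp.equiv 2 (Fin n → ℝ)).symm v‖ := by
    intro v
    rw [EuclideanSpace.norm_eq]
    congr 1
    refine Finset.sum_congr rfl fun i _ => ?_
    simp [Real.norm_eq_abs, sq_abs]
  rw [key, key, key]
  have : (WithLp.equiv 2 (Fin n → ℝ)).symm (fun i => x i + y i)
      = (WithLp.equiv 2 (Fin n → ℝ)).symm x + (WithLp.equiv 2 (Fin n → ℝ)).symm y := rfl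
  rw [this]
  exact norm_add_le _ _

lemma aux_main {n s : ℕ} {q : ℝ} (hq0 : 0 < q) (hq1 : q ≤ 1)
    (x₀ h : Fin n → ℝ) (hx0 : x₀ ≠ 0)
    (hcard : (Finset.univ.filter (fun i => x₀ i ≠ 0)).card ≤ s)
    (hh : h ≠ 0)
    (hkh : (∑ i, |h i| ^ q) ^ (1 / q) / Real.sqrt (∑ i, (h i) ^ 2)
        > (3 : ℝ) ^ (1 / q) * (s : ℝ) ^ (1 / q - 1 / 2)) :
    (∑ i, |x₀ i| ^ q) / (Real.sqrt (∑ i, (x₀ i) ^ 2)) ^ q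
      < (∑ i, |x₀ i + h i| ^ q) / (Real.sqrt (∑ i, (x₀ i + h i) ^ 2)) ^ q := by
  set T := Finset.univ.filter (fun i => x₀ i ≠ 0) with hT
  -- basic positivity
  obtain ⟨i₀, hi₀⟩ := Function.ne_iff.mp hx0
  obtain ⟨j₀, hj₀⟩ := Function.ne_iff.mp hh
  have hsqpos : ∀ {t : ℝ}, t ≠ 0 → 0 < t ^ 2 := fun {t} ht => by
    rw [← sq_abs]; exact pow_pos (abs_pos.mpr ht) 2
  have ha2 : 0 < ∑ i, (x₀ i) ^ 2 :=
    Finset.sum_pos' (fun i _ => sq_nonneg _) ⟨i₀, Finset.mem_univ _, hsqpos hi₀⟩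
  have hb2 : 0 < ∑ i, (h i) ^ 2 :=
    Finset.sum_pos' (fun i _ => sq_nonneg _) ⟨j₀, Finset.mem_univ _, hsqpos hj₀⟩
  have hsq : ∀ t : ℝ, 0 ≤ t → Real.sqrt t ^ q = t ^ (q / 2) := by
    intro t ht
    rw [Real.sqrt_eq_rpow, ← Real.rpow_mul ht, show 1 / 2 * q = q / 2 by ring]
  -- abbreviations
  set u := ∑ i, |x₀ i| ^ q with hu
  set H := ∑ i, |h i| ^ q with hHdef
  set N := ∑ i, |x₀ i + h i| ^ q with hNdef
  set P := ∑ i ∈ T, |h i| ^ q with hP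
  set S := (s : ℝ) ^ (1 - q / 2) with hS
  set A := Real.sqrt (∑ i, (x₀ i) ^ 2) ^ q with hA
  set B := Real.sqrt (∑ i, (h i) ^ 2) ^ q with hB
  set C := Real.sqrt (∑ i, (x₀ i + h i) ^ 2) ^ q with hC
  have hApos : 0 < A := Real.rpow_pos_of_pos (Real.sqrt_pos.mpr ha2) q
  have hBpos : 0 < B := Real.rpow_pos_of_pos (Real.sqrt_pos.mpr hb2) q
  have hS0 : 0 ≤ S := by positivity
  have hu0 : 0 ≤ u := Finset.sum_nonneg fun i _ => by positivity
  have hH0 : 0 ≤ H := Finset.sum_nonneg fun i _ => by positivity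
  -- sparse bound machinery
  have hsparse : ∀ v : Fin n → ℝ, (∑ i ∈ T, |v i| ^ q)
      ≤ S * Real.sqrt (∑ i, (v i) ^ 2) ^ q := by
    intro v
    rw [hsq _ (Finset.sum_nonneg fun i _ => sq_nonneg _)]
    refine (aux_sparse hq0 hq1 T hcard v).trans ?_
    refine mul_le_mul_of_nonneg_left ?_ (by positivity)
    exact Real.rpow_le_rpow (Finset.sum_nonneg fun i _ => sq_nonneg _)
      (Finset.sum_le_sum_of_subset_of_nonneg (Finset.subset_univ T)
        (fun i _ _ => sq_nonneg _)) (by positivity)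
  -- F1 : u ≤ S * A
  have hu_eq : u = ∑ i ∈ T, |x₀ i| ^ q := by
    rw [hu, hT]
    symm
    refine Finset.sum_filter_of_ne fun i _ hne => ?_
    intro hzero
    exact hne (by rw [hzero, abs_zero, Real.zero_rpow hq0.ne'])
  have F1 : u ≤ S * A := by rw [hu_eq]; exact hsparse x₀
  -- F2 : P ≤ S * B
  have F2 : P ≤ S * B := hsparse h
  -- F3 : 3 * S * B < H
  have F3 : 3 * S * B < H := by
    have h3 : (0:ℝ) ≤ (3 : ℝ) ^ (1/q) * (s : ℝ) ^ (1/q - 1/2) := by positivity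
    have key := Real.rpow_lt_rpow h3 hkh hq0
    rw [Real.mul_rpow (by positivity) (by positivity),
      ← Real.rpow_mul (by norm_num : (0:ℝ) ≤ 3),
      ← Real.rpow_mul (Nat.cast_nonneg s),
      one_div_mul_cancel hq0.ne', Real.rpow_one,
      show (1/q - 1/2) * q = 1 - q/2 by field_simp,
      Real.div_rpow (Real.rpow_nonneg hH0 _) (Real.sqrt_nonneg _),
      ← Real.rpow_mul hH0, one_div_mul_cancel hq0.ne', Real.rpow_one] at key
    rw [← hB, ← hS] at key
    calc 3 * S * B < H / B * B := by
          have := (mul_lt_mul_of_pos_right key hBpos)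
          linarith
      _ = H := div_mul_cancel₀ H hBpos.ne'
  -- F4 : u + H - 2 * P ≤ N
  have F4 : u + H - 2 * P ≤ N := by
    have hsplit : ∀ f : Fin n → ℝ, ∑ i, f i
        = ∑ i ∈ T, f i + ∑ i ∈ Finset.univ.filter (fun i => ¬ x₀ i ≠ 0), f i :=
      fun f => (Finset.sum_filter_add_sum_filter_not Finset.univ _ f).symm
    have hcompl : ∑ i ∈ Finset.univ.filter (fun i => ¬ x₀ i ≠ 0), |x₀ i + h i| ^ q
        = ∑ i ∈ Finset.univ.filter (fun i => ¬ x₀ i ≠ 0), |h i| ^ q := by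
      refine Finset.sum_congr rfl fun i hi => ?_
      have : x₀ i = 0 := not_not.mp (Finset.mem_filter.mp hi).2
      rw [this, zero_add]
    have hT_lb : ∑ i ∈ T, |x₀ i| ^ q - ∑ i ∈ T, |h i| ^ q
        ≤ ∑ i ∈ T, |x₀ i + h i| ^ q := by
      rw [sub_le_iff_le_add, ← Finset.sum_add_distrib]
      refine Finset.sum_le_sum fun i _ => ?_
      have := aux_abs_add_rpow hq0 hq1 (x₀ i + h i) (-h i)
      rw [show x₀ i + h i + -h i = x₀ i by ring, abs_neg] at this
      exact this
    have e1 : N = ∑ i ∈ T, |x₀ i + h i| ^ q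
        + ∑ i ∈ Finset.univ.filter (fun i => ¬ x₀ i ≠ 0), |h i| ^ q := by
      rw [hNdef, hsplit, hcompl]
    have e2 : H = P + ∑ i ∈ Finset.univ.filter (fun i => ¬ x₀ i ≠ 0), |h i| ^ q := by
      rw [hHdef, hsplit, hP]
    rw [hu_eq]
    rw [← hP] at hT_lb
    linarith
  -- positivity of c
  have hc2 : 0 < ∑ i, (x₀ i + h i) ^ 2 := by
    rcases lt_or_eq_of_le (Finset.sum_nonneg fun (i : Fin n) (_ : i ∈ Finset.univ)
      => sq_nonneg (x₀ i + h i)) with hlt | heq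
    · exact hlt
    · exfalso
      have hall : ∀ i, x₀ i + h i = 0 := by
        intro i
        have := (Finset.sum_eq_zero_iff_of_nonneg
          (fun (i : Fin n) (_ : i ∈ Finset.univ) => sq_nonneg (x₀ i + h i))).mp heq.symm
          i (Finset.mem_univ i)
        exact pow_eq_zero_iff (by norm_num) |>.mp this
      have hHu : H = u := by
        refine Finset.sum_congr rfl fun i _ => ?_
        have : h i = -x₀ i := by have := hall i; linarith
        rw [this, abs_neg]
      have hba : B = A := by
        rw [hB, hA]
        congr 2
        refine Finset.sum_congr rfl fun i _ => ?_
        have : h i = -x₀ i := by have := hall i; linarith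
        rw [this, neg_pow]
        ring
      rw [hHu, hba] at F3
      nlinarith
  have hCpos : 0 < C := Real.rpow_pos_of_pos (Real.sqrt_pos.mpr hc2) q
  -- F5 : C ≤ A + B
  have F5 : C ≤ A + B := by
    calc C ≤ (Real.sqrt (∑ i, (x₀ i) ^ 2) + Real.sqrt (∑ i, (h i) ^ 2)) ^ q :=
          Real.rpow_le_rpow (Real.sqrt_nonneg _) (aux_minkowski x₀ h) hq0.le
      _ ≤ A + B := aux_add_rpow hq0 hq1 (Real.sqrt_nonneg _) (Real.sqrt_nonneg _)
  -- conclude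
  rw [div_lt_div_iff₀ hApos hCpos]
  have hkey : u + S * B < N := by linarith
  nlinarith [mul_le_mul_of_nonneg_left F5 hu0,
    mul_le_mul_of_nonneg_right F1 hBpos.le,
    mul_lt_mul_of_pos_right hkey hApos]


theorem stmt_3 (m n s : ℕ) (q : ℝ) (hq0 : 0 < q) (hq1 : q ≤ 1)
    (A : Matrix (Fin m) (Fin n) ℝ)
    (hker : ∀ h : Fin n → ℝ, h ≠ 0 → A.mulVec h = 0 →
      (∑ i, |h i| ^ q) ^ (1 / q) / Real.sqrt (∑ i, (h i) ^ 2)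
        > (3 : ℝ) ^ (1 / q) * (s : ℝ) ^ (1 / q - 1 / 2)) :
    (∀ x₀ : Fin n → ℝ, x₀ ≠ 0 →
        (Finset.univ.filter (fun i => x₀ i ≠ 0)).card ≤ s →
      ∀ h : Fin n → ℝ, h ≠ 0 → A.mulVec h = 0 →
        (∑ i, |x₀ i| ^ q) / (Real.sqrt (∑ i, (x₀ i) ^ 2)) ^ q
          < (∑ i, |x₀ i + h i| ^ q) / (Real.sqrt (∑ i, (x₀ i + h i) ^ 2)) ^ q) ∧
    (∀ x₀ : Fin n → ℝ, x₀ ≠ 0 →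
        (Finset.univ.filter (fun i => x₀ i ≠ 0)).card ≤ s →
      ∀ x : Fin n → ℝ, x ≠ x₀ → A.mulVec x = A.mulVec x₀ →
        (∑ i, |x₀ i| ^ q) ^ (1 / q) / Real.sqrt (∑ i, (x₀ i) ^ 2)
          < (∑ i, |x i| ^ q) ^ (1 / q) / Real.sqrt (∑ i, (x i) ^ 2)) := by
  constructor
  · intro x₀ hx0 hcard h hh hAh
    exact aux_main hq0 hq1 x₀ h hx0 hcard hh (hker h hh hAh)
  · intro x₀ hx0 hcard x hxne hAx
    set h := x - x₀ with hhdef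
    have hh : h ≠ 0 := sub_ne_zero.mpr hxne
    have hAh : A.mulVec h = 0 := by
      rw [hhdef, Matrix.mulVec_sub, hAx, sub_self]
    have key := aux_main hq0 hq1 x₀ h hx0 hcard hh (hker h hh hAh)
    have hrw : ∀ i, x₀ i + h i = x i := fun i => by
      simp [hhdef]
    simp only [hrw] at key
    -- positivity
    obtain ⟨i₀, hi₀⟩ := Function.ne_iff.mp hx0
    have ha2 : 0 < ∑ i, (x₀ i) ^ 2 := by
      refine Finset.sum_pos' (fun i _ => sq_nonneg _) ⟨i₀, Finset.mem_univ _, ?_⟩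
      have : x₀ i₀ ≠ 0 := hi₀
      rw [← sq_abs]; exact pow_pos (abs_pos.mpr this) 2
    have ha : 0 < Real.sqrt (∑ i, (x₀ i) ^ 2) := Real.sqrt_pos.mpr ha2
    have hu0 : 0 ≤ ∑ i, |x₀ i| ^ q := Finset.sum_nonneg fun i _ => by positivity
    have hN0 : 0 ≤ ∑ i, |x i| ^ q := Finset.sum_nonneg fun i _ => by positivity
    have hApos : 0 < Real.sqrt (∑ i, (x₀ i) ^ 2) ^ q := Real.rpow_pos_of_pos ha q
    have hc : 0 < Real.sqrt (∑ i, (x i) ^ 2) := by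
      rcases lt_or_eq_of_le (Real.sqrt_nonneg (∑ i, (x i) ^ 2)) with hlt | heq
      · exact hlt
      · exfalso
        rw [← heq, Real.zero_rpow hq0.ne', div_zero] at key
        have hlhs : 0 ≤ (∑ i, |x₀ i| ^ q) / Real.sqrt (∑ i, (x₀ i) ^ 2) ^ q := by
          positivity
        linarith
    have hCpos : 0 < Real.sqrt (∑ i, (x i) ^ 2) ^ q := Real.rpow_pos_of_pos hc q
    rw [div_lt_div_iff₀ hApos hCpos] at key
    rw [div_lt_div_iff₀ ha hc]
    have step := Real.rpow_lt_rpow (by positivity) key (one_div_pos.mpr hq0)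
    rw [Real.mul_rpow hu0 hCpos.le, Real.mul_rpow hN0 hApos.le] at step
    have hexp : ∀ t : ℝ, 0 ≤ t → (t ^ q) ^ (1 / q) = t := by
      intro t ht
      rw [← Real.rpow_mul ht, mul_one_div_cancel hq0.ne', Real.rpow_one]
    rw [hexp _ hc.le, hexp _ ha.le] at step
    exact step
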